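/- For p₀, α ∈ (0,1) and natural numbers η, μ₁, μ₂, with p₁ = 1 − α^{η+μ₁}(1−p₀) and p₂ = 1 − α^{μ₂}(1−p₀), the simultaneous-cession probability P_sim = (1−p₁)(1−p₂)/(1−p₁p₂) satisfies P_sim ≤ (1−p₀) · α^{η+μ₁}/(1 − α^{η+μ₁}) whenever α^{η+μ₁} < 1 and η+μ₁ ≥ 1. -/
import Mathlib


theorem stmt_9 (p₀ α : ℝ) (hp₀0 : 0 < p₀) (hp₀1 : p₀ < 1) (hα0 : 0 < α) (hα1 : α < 1)
    (η μ₁ μ₂ : ℕ) (hηm : 1 ≤ η + μ₁) (hαpow : α ^ (η + μ₁) < 1)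
    (p₁ p₂ : ℝ) (hp₁ : p₁ = 1 - α ^ (η + μ₁) * (1 - p₀))
    (hp₂ : p₂ = 1 - α ^ μ₂ * (1 - p₀)) :
    (1 - p₁) * (1 - p₂) / (1 - p₁ * p₂)
      ≤ (1 - p₀) * (α ^ (η + μ₁) / (1 - α ^ (η + μ₁))) := by
  subst hp₁ hp₂
  set A := α ^ (η + μ₁) with hA
  set B := α ^ μ₂ with hB
  set t := 1 - p₀ with ht
  have hA0 : 0 < A := pow_pos hα0 _
  have hB0 : 0 < B := pow_pos hα0 _
  have hB1 : B ≤ 1 := pow_le_one₀ hα0.le hα1.le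
  have ht0 : 0 < t := by simp [ht]; linarith
  have ht1 : t < 1 := by simp [ht]; linarith
  have hAt : A * t < 1 := by nlinarith
  have h1A : 0 < 1 - A := by linarith
  have hD : 0 < A * t + B * t - A * t * (B * t) := by
    nlinarith [mul_pos hA0 ht0, mul_pos (mul_pos hB0 ht0) (sub_pos.mpr hAt)]
  have hnum : (1 - (1 - A * t)) * (1 - (1 - B * t)) = (A * t) * (B * t) := by ring
  have hden : 1 - (1 - A * t) * (1 - B * t) = A * t + B * t - A * t * (B * t) := by ring
  rw [hnum, hden, div_le_iff₀ hD]
  have hR : t * (A / (1 - A)) = t * A / (1 - A) := by ring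
  rw [hR, div_mul_eq_mul_div, le_div_iff₀ h1A]
  nlinarith [mul_pos hA0 ht0, mul_pos hB0 ht0, sq_nonneg (A * t),
    mul_nonneg (mul_nonneg (sq_nonneg (A * t)) hB0.le) (sub_nonneg.mpr ht1.le)]
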